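/- Let ψ(x) = x² + 1/4, let x_0 ≥ 2, and define x_{n+1} ≥ 0 by x_{n+1}² + 1/4 = x_n. Set y_k = 2x_k. Then for every n ∈ ℕ, the derivative of the n-th iterate satisfies ψ_n'(x_n) = ∏_{j=0}^{n−1} 2ψ_j(x_n) = ∏_{k=1}^{n} y_k, and ψ_n'(x_n)^n ≥ ((n+2)²/4)^n. -/

import Mathlib

theorem stmt_17 (ψ : ℝ → ℝ) (hψ : ∀ t, ψ t = t ^ 2 + 1 / 4)
    (x : ℕ → ℝ) (hx0 : 2 ≤ x 0)
    (hpos : ∀ n : ℕ, 0 ≤ x (n + 1))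
    (hrec : ∀ n : ℕ, (x (n + 1)) ^ 2 + 1 / 4 = x n)
    (y : ℕ → ℝ) (hy : ∀ k, y k = 2 * x k) :
    ∀ n : ℕ, 1 ≤ n →
      deriv (ψ^[n]) (x n) = ∏ j ∈ Finset.range n, 2 * ψ^[j] (x n) ∧
      deriv (ψ^[n]) (x n) = ∏ k ∈ Finset.Icc 1 n, y k ∧
      (((n : ℝ) + 2) ^ 2 / 4) ^ n ≤ (deriv (ψ^[n]) (x n)) ^ n := by
  -- derivative of ψ
  have hdψ : ∀ t : ℝ, HasDerivAt ψ (2 * t) t := by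
    intro t
    have h : HasDerivAt (fun s : ℝ => s ^ 2 + 1 / 4) (2 * t) t := by
      simpa using (hasDerivAt_pow 2 t).add_const (1 / 4)
    have : ψ = fun s : ℝ => s ^ 2 + 1 / 4 := funext hψ
    rw [this]
    exact h
  -- derivative of iterates
  have hder : ∀ (n : ℕ) (t : ℝ),
      HasDerivAt (ψ^[n]) (∏ j ∈ Finset.range n, 2 * ψ^[j] t) t := by
    intro n
    induction n with
    | zero => intro t; simpa using hasDerivAt_id t
    | succ n ih =>
      intro t
      have h1 : HasDerivAt ψ (2 * ψ^[n] t) (ψ^[n] t) := hdψ _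
      have h2 := h1.comp t (ih t)
      rw [Function.iterate_succ']
      rw [Finset.prod_range_succ]
      simpa [mul_comm] using h2
  -- ψ maps x (n+1) to x n
  have hstep : ∀ n : ℕ, ψ (x (n + 1)) = x n := by
    intro n; rw [hψ]; exact hrec n
  -- product identity
  have hprod : ∀ n : ℕ,
      (∏ j ∈ Finset.range n, 2 * ψ^[j] (x n)) = ∏ k ∈ Finset.Icc 1 n, y k := by
    intro n
    induction n with
    | zero => simp
    | succ n ih =>
      rw [Finset.prod_range_succ']
      have h1 : ∀ j, ψ^[j + 1] (x (n + 1)) = ψ^[j] (x n) := by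
        intro j
        rw [Function.iterate_succ_apply, hstep]
      have h2 : (∏ j ∈ Finset.range n, 2 * ψ^[j + 1] (x (n + 1)))
          = ∏ j ∈ Finset.range n, 2 * ψ^[j] (x n) := by
        apply Finset.prod_congr rfl
        intro j _; rw [h1]
      rw [h2, ih, Function.iterate_zero_apply, ← hy]
      rw [Finset.prod_Icc_succ_top (Nat.succ_le_succ (Nat.zero_le n))]
  -- nonnegativity of y
  have hynn : ∀ k : ℕ, 0 ≤ y k := by
    intro k
    rw [hy]
    cases k with
    | zero => linarith
    | succ m => linarith [hpos m]
  -- recursion for y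
  have hyrec : ∀ n : ℕ, y (n + 1) ^ 2 + 1 = 2 * y n := by
    intro n
    rw [hy, hy]
    nlinarith [hrec n]
  -- key per-term bound : (k+2)^2 ≤ y k * (k+1)^2
  have hb : ∀ k : ℕ, ((k : ℝ) + 2) ^ 2 ≤ y k * ((k : ℝ) + 1) ^ 2 := by
    intro k
    induction k with
    | zero =>
      have : (4 : ℝ) ≤ y 0 := by rw [hy]; linarith
      norm_num
      linarith
    | succ n ih =>
      have a := (n : ℝ)
      set a := (n : ℝ) with ha
      have ha0 : (0 : ℝ) ≤ a := Nat.cast_nonneg n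
      have hrecy : y (n + 1) ^ 2 = 2 * y n - 1 := by linarith [hyrec n]
      have hnn : 0 ≤ y (n + 1) := hynn (n + 1)
      have hsq : ((a + 3) ^ 2) ^ 2 ≤ (y (n + 1) * (a + 2) ^ 2) ^ 2 := by
        have h1 : (y (n + 1) * (a + 2) ^ 2) ^ 2 = (2 * y n - 1) * (a + 2) ^ 4 := by
          rw [mul_pow, hrecy]; ring
        rw [h1]
        have hpos1 : (0 : ℝ) < (a + 1) ^ 2 := by positivity
        rw [← mul_le_mul_iff_left₀ hpos1]
        have h2 : (2 * y n - 1) * (a + 2) ^ 4 * (a + 1) ^ 2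
            = (2 * (y n * (a + 1) ^ 2) - (a + 1) ^ 2) * (a + 2) ^ 4 := by ring
        rw [h2]
        have h3 : (2 * ((a + 2) ^ 2) - (a + 1) ^ 2) * (a + 2) ^ 4
            ≤ (2 * (y n * (a + 1) ^ 2) - (a + 1) ^ 2) * (a + 2) ^ 4 := by
          have : (0 : ℝ) ≤ (a + 2) ^ 4 := by positivity
          nlinarith [ih]
        refine le_trans ?_ h3
        nlinarith [ha0, sq_nonneg a, sq_nonneg (a + 1), sq_nonneg (a * a)]
      have h4 : (0 : ℝ) ≤ (a + 3) ^ 2 := by positivity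
      have h5 : (0 : ℝ) ≤ y (n + 1) * (a + 2) ^ 2 := by positivity
      have h6 : (a + 3) ^ 2 ≤ y (n + 1) * (a + 2) ^ 2 :=
        (pow_le_pow_iff_left₀ h4 h5 two_ne_zero).mp hsq
      push_cast
      linarith [h6]
  -- product lower bound
  have hP : ∀ n : ℕ, ((n : ℝ) + 2) ^ 2 / 4 ≤ ∏ k ∈ Finset.Icc 1 n, y k := by
    intro n
    induction n with
    | zero => norm_num
    | succ n ih =>
      rw [Finset.prod_Icc_succ_top (Nat.succ_le_succ (Nat.zero_le n))]
      have h1 : ((n : ℝ) + 2) ^ 2 / 4 * y (n + 1) ≤ (∏ k ∈ Finset.Icc 1 n, y k) * y (n + 1) :=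
        mul_le_mul_of_nonneg_right ih (hynn (n + 1))
      have h2 : (((n : ℕ) + 1 : ℕ) : ℝ) + 2 = (n : ℝ) + 3 := by push_cast; ring
      rw [h2]
      have hb' := hb (n + 1)
      have h3 : ((n : ℝ) + 3) ^ 2 / 4 ≤ ((n : ℝ) + 2) ^ 2 / 4 * y (n + 1) := by
        push_cast at hb'
        nlinarith [hb']
      linarith
  -- conclusion
  intro n _
  have hd1 : deriv (ψ^[n]) (x n) = ∏ j ∈ Finset.range n, 2 * ψ^[j] (x n) :=
    (hder n (x n)).deriv
  have hd2 : deriv (ψ^[n]) (x n) = ∏ k ∈ Finset.Icc 1 n, y k := by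
    rw [hd1, hprod]
  refine ⟨hd1, hd2, ?_⟩
  rw [hd2]
  exact pow_le_pow_left₀ (by positivity) (hP n) n
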